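/- Every abelian subgroup of a Frobenius complement is cyclic. -/

import Mathlib

open Finset MulAction Subgroup

private lemma list_prod_range {M : Type*} [CommMonoid M] (f : ℕ → M) (n : ℕ) :
    ((List.range n).map f).prod = ∏ k ∈ Finset.range n, f k := by
  induction n with
  | zero => simp
  | succ n ih => rw [List.range_succ, Finset.prod_range_succ, List.map_append, List.prod_append, ih]; simp

/-- The norm trick: if `h ≠ 1` acts fixed-point-freely and `h ^ p = 1`, then the product
of the orbit-translates over `k < p` is `1`. -/
private lemma normProd {H K : Type*} [Group H] [CommGroup K] [Finite K]
    [MulDistribMulAction H K]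
    (hfree : ∀ h : H, h ≠ 1 → ∀ x : K, h • x = x → x = 1)
    {p : ℕ} (h : H) (h1 : h ≠ 1) (hhp : h ^ p = 1) (y : K) :
    ∏ k ∈ Finset.range p, h ^ k • y = 1 := by
  set φ : K →* K :=
    { toFun := (h • ·)
      map_one' := smul_one h
      map_mul' := fun a b => smul_mul' h a b } with hφ
  have hiter : ∀ k : ℕ, ∀ x : K, φ^[k] x = h ^ k • x := by
    intro k
    induction k with
    | zero => intro x; simp
    | succ k ih =>
      intro x
      rw [Function.iterate_succ_apply', ih x]
      show h • (h ^ k • x) = h ^ (k + 1) • x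
      rw [smul_smul, ← pow_succ']
  have hfpf : MonoidHom.FixedPointFree φ := hfree h h1
  have hid : φ^[p] = _root_.id := by
    funext x
    rw [hiter p x, hhp, one_smul, Function.id_def]
  have := hfpf.prod_pow_eq_one hid y
  rw [← this, list_prod_range]
  exact Finset.prod_congr rfl fun k _ => (hiter k y).symm

/-- Heart of the argument: if two commuting elements of order `p` generate a non-cyclic group
acting fixed-point-freely on a commutative `K`, then every element of `K` has order dividing
`p`. -/
private lemma heart {H K : Type*} [Group H] [Group K] [Finite H] [Finite K]
    [MulDistribMulAction H K]
    (hcomm : ∀ x y : K, x * y = y * x)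
    (hfree : ∀ h : H, h ≠ 1 → ∀ x : K, h • x = x → x = 1)
    {p : ℕ} (hp : p.Prime) {u v : H} (huv : Commute u v)
    (hu : u ^ p = 1) (hv : v ^ p = 1) (hu1 : u ≠ 1) (hvz : v ∉ Subgroup.zpowers u)
    (x : K) : x ^ p = 1 := by
  letI : CommGroup K := { (inferInstance : Group K) with mul_comm := hcomm }
  haveI : Fact p.Prime := ⟨hp⟩
  have hv1 : v ≠ 1 := fun h => hvz (h ▸ (Subgroup.zpowers u).one_mem)
  have ou : orderOf u = p := orderOf_eq_prime hu hu1
  have ov : orderOf v = p := orderOf_eq_prime hv hv1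
  have hvk : ∀ k : ℕ, k < p → k ≠ 0 → v ^ k ≠ 1 := by
    intro k hk hk0 hvk
    have : p ∣ k := ov ▸ orderOf_dvd_of_pow_eq_one hvk
    exact absurd (Nat.le_of_dvd (Nat.pos_of_ne_zero hk0) this) (not_le.mpr hk)
  have huvd : ∀ d : ℕ, u * v ^ d ≠ 1 := by
    intro d h1
    have huzv : u ∈ Subgroup.zpowers v := by
      have : u = (v ^ d)⁻¹ := eq_inv_of_mul_eq_one_left h1
      rw [this]
      exact (Subgroup.zpowers v).inv_mem (zpow_natCast v d ▸ Subgroup.zpow_mem _ (Subgroup.mem_zpowers v) (d : ℤ))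
    have hle : (Subgroup.zpowers u : Set H) ⊆ (Subgroup.zpowers v : Set H) :=
      Subgroup.zpowers_le.mpr huzv
    have hcard : ((Subgroup.zpowers v : Subgroup H) : Set H).ncard ≤
        ((Subgroup.zpowers u : Subgroup H) : Set H).ncard := by
      rw [← Nat.card_coe_set_eq, ← Nat.card_coe_set_eq]
      show Nat.card (Subgroup.zpowers v) ≤ Nat.card (Subgroup.zpowers u)
      rw [Nat.card_zpowers, Nat.card_zpowers, ou, ov]
    have hset : (Subgroup.zpowers u : Set H) = (Subgroup.zpowers v : Set H) :=
      Set.eq_of_subset_of_ncard_le hle hcard (Set.toFinite _)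
    apply hvz
    have hm : v ∈ (Subgroup.zpowers v : Set H) := Subgroup.mem_zpowers v
    rwa [← hset] at hm
  -- the double product
  have hT1 : (∏ k ∈ Finset.range p, ∏ d ∈ Finset.range p, (u ^ k * v ^ (k * d)) • x) = 1 := by
    rw [Finset.prod_comm]
    refine Finset.prod_eq_one fun d _ => ?_
    have key : ∀ k : ℕ, u ^ k * v ^ (k * d) = (u * v ^ d) ^ k := by
      intro k
      rw [(huv.pow_right d).mul_pow, ← pow_mul, Nat.mul_comm d k]
    calc (∏ k ∈ Finset.range p, (u ^ k * v ^ (k * d)) • x)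
        = ∏ k ∈ Finset.range p, ((u * v ^ d) ^ k) • x :=
          Finset.prod_congr rfl fun k _ => by rw [key]
      _ = 1 := normProd hfree _ (huvd d)
            (by rw [(huv.pow_right d).mul_pow, ← pow_mul, Nat.mul_comm d p, pow_mul, hu, hv, one_pow, one_mul]) x
  have hT2 : (∏ k ∈ Finset.range p, ∏ d ∈ Finset.range p, (u ^ k * v ^ (k * d)) • x) = x ^ p := by
    rw [Finset.prod_eq_single_of_mem 0 (Finset.mem_range.mpr hp.pos)]
    · simp [Finset.prod_const, Finset.card_range]
    · intro k hk hk0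
      have hvkne : v ^ k ≠ 1 := hvk k (Finset.mem_range.mp hk) hk0
      have : (∏ d ∈ Finset.range p, (u ^ k * v ^ (k * d)) • x)
          = u ^ k • ∏ d ∈ Finset.range p, ((v ^ k) ^ d) • x := by
        calc (∏ d ∈ Finset.range p, (u ^ k * v ^ (k * d)) • x)
            = ∏ d ∈ Finset.range p,
                MulDistribMulAction.toMonoidHom K (u ^ k) ((v ^ k) ^ d • x) :=
              Finset.prod_congr rfl fun d _ => by
                rw [MulDistribMulAction.toMonoidHom_apply, mul_smul, pow_mul]
          _ = MulDistribMulAction.toMonoidHom K (u ^ k)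
                (∏ d ∈ Finset.range p, ((v ^ k) ^ d) • x) := (map_prod _ _ _).symm
          _ = u ^ k • ∏ d ∈ Finset.range p, ((v ^ k) ^ d) • x :=
              MulDistribMulAction.toMonoidHom_apply _ _ _
      rw [this, normProd hfree _ hvkne (by rw [← pow_mul, Nat.mul_comm k p, pow_mul, hv, one_pow]) x,
        smul_one]
  rw [hT1] at hT2
  exact hT2.symm



open Pointwise in
/-- In a Frobenius complement, commuting elements of prime order `p` generate a cyclic group. -/
private lemma key {H K : Type*} [Group H] [Group K] [Finite H] [Finite K] [Nontrivial K]
    [MulDistribMulAction H K]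
    (hfree : ∀ h : H, h ≠ 1 → ∀ x : K, h • x = x → x = 1)
    {p : ℕ} (hp : p.Prime) {u v : H} (huv : Commute u v)
    (hu : u ^ p = 1) (hv : v ^ p = 1) (hu1 : u ≠ 1) :
    v ∈ Subgroup.zpowers u := by
  haveI : Fact p.Prime := ⟨hp⟩
  by_contra hvz
  -- Step A : `p` does not divide the cardinality of `K`.
  have hpK : ¬ p ∣ Nat.card K := by
    have hPu : IsPGroup p (Subgroup.zpowers u) := by
      intro g
      refine ⟨1, ?_⟩
      obtain ⟨m, hm⟩ := Subgroup.mem_zpowers_iff.mp g.2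
      have : (g : H) ^ p = 1 := by
        rw [← hm, ← zpow_natCast, ← zpow_mul, mul_comm, zpow_mul, zpow_natCast, hu, one_zpow]
      ext
      rw [pow_one]
      push_cast
      exact this
    have hfix : MulAction.fixedPoints (Subgroup.zpowers u) K = {1} := by
      ext x
      constructor
      · intro hx
        exact hfree u hu1 x (hx (⟨u, Subgroup.mem_zpowers u⟩ : Subgroup.zpowers u))
      · rintro rfl
        intro g
        exact smul_one _
    have hmod := hPu.card_modEq_card_fixedPoints K
    rw [hfix] at hmod
    haveI : Unique (({1} : Set K)) := Set.uniqueSingleton 1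
    have hone : Nat.card (({1} : Set K)) = 1 := Nat.card_unique
    rw [hone] at hmod
    intro hdvd
    obtain ⟨c, hc⟩ := hdvd
    rw [Nat.ModEq, hc, Nat.mul_mod_right, Nat.mod_eq_of_lt hp.one_lt] at hmod
    exact one_ne_zero hmod.symm
  -- Step B : find a Sylow subgroup of `K` invariant under `E = ⟨u, v⟩`.
  have hK1 : Nat.card K ≠ 1 := ne_of_gt Finite.one_lt_card
  set q := (Nat.card K).minFac with hqdef
  have hq : q.Prime := Nat.minFac_prime hK1
  haveI : Fact q.Prime := ⟨hq⟩
  have hqK : q ∣ Nat.card K := Nat.minFac_dvd _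
  -- the subgroup generated by u and v
  set S' : Subgroup H :=
    { carrier := {g | ∃ m n : ℤ, g = u ^ m * v ^ n}
      one_mem' := ⟨0, 0, by simp⟩
      mul_mem' := by
        rintro a b ⟨m, n, rfl⟩ ⟨m', n', rfl⟩
        refine ⟨m + m', n + n', ?_⟩
        have hc : v ^ n * u ^ m' = u ^ m' * v ^ n := (huv.symm.zpow_zpow n m').eq
        rw [zpow_add, zpow_add, mul_assoc, ← mul_assoc (v ^ n), hc, mul_assoc, mul_assoc]
      inv_mem' := by
        rintro a ⟨m, n, rfl⟩
        refine ⟨-m, -n, ?_⟩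
        rw [mul_inv_rev, ← zpow_neg, ← zpow_neg]
        exact ((huv.zpow_zpow (-m) (-n)).eq).symm ▸ (huv.zpow_zpow (-m) (-n)).symm.eq } with hS'def
  have hEp : ∀ g : S', (g : H) ^ p = 1 := by
    rintro ⟨g, m, n, rfl⟩
    show (u ^ m * v ^ n) ^ p = 1
    rw [(huv.zpow_zpow m n).mul_pow, ← zpow_natCast (u ^ m), ← zpow_natCast (v ^ n),
      ← zpow_mul, ← zpow_mul, mul_comm m, mul_comm n, zpow_mul, zpow_mul, zpow_natCast,
      zpow_natCast, hu, hv, one_zpow, one_zpow, one_mul]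
  have huS : u ∈ S' := ⟨1, 0, by simp⟩
  have hvS : v ∈ S' := ⟨0, 1, by simp⟩
  have hPS : IsPGroup p S' := fun g => ⟨1, by ext; rw [pow_one]; push_cast; exact hEp g⟩
  have hSylcard : ¬ p ∣ Nat.card (Sylow q K) := by
    intro hdvd
    obtain ⟨Q⟩ := (inferInstance : Nonempty (Sylow q K))
    exact hpK (hdvd.trans ((Q.card_dvd_index).trans Q.toSubgroup.index_dvd_card))
  obtain ⟨Q, hQ⟩ := hPS.nonempty_fixed_point_of_prime_not_dvd_card (Sylow q K) hSylcard
  have hQfix : ∀ g ∈ S', g • (Q : Subgroup K) = (Q : Subgroup K) := by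
    intro g hg
    have := hQ (⟨g, hg⟩ : S')
    have h2 : g • Q = Q := this
    calc g • (Q : Subgroup K) = ((g • Q : Sylow q K) : Subgroup K) := rfl
      _ = (Q : Subgroup K) := by rw [h2]
  -- Step C : the center of the invariant Sylow subgroup.
  set Z : Subgroup K := (Q : Subgroup K) ⊓ Subgroup.centralizer (Q : Subgroup K) with hZdef
  have hZcomm : ∀ a ∈ Z, ∀ b ∈ Z, a * b = b * a := by
    intro a ha b hb
    exact (Subgroup.mem_centralizer_iff.mp (Subgroup.mem_inf.mp ha).2 b (Subgroup.mem_inf.mp hb).1).symm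
  have hZinv : ∀ g ∈ S', ∀ x ∈ Z, g • x ∈ Z := by
    intro g hg x hx
    obtain ⟨hx1, hx2⟩ := Subgroup.mem_inf.mp hx
    refine Subgroup.mem_inf.mpr ⟨?_, ?_⟩
    · have := Subgroup.smul_mem_pointwise_smul x g (Q : Subgroup K) hx1
      rwa [hQfix g hg] at this
    · rw [Subgroup.mem_centralizer_iff]
      intro y hy
      have hy' : y ∈ g • (Q : Subgroup K) := by rw [hQfix g hg]; exact hy
      obtain ⟨z, hz, rfl⟩ : ∃ z ∈ (Q : Subgroup K), g • z = y := by
        refine ⟨g⁻¹ • y, ?_, smul_inv_smul g y⟩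
        rwa [← Subgroup.mem_pointwise_smul_iff_inv_smul_mem, hQfix g hg]
      rw [← smul_mul', ← smul_mul', Subgroup.mem_centralizer_iff.mp hx2 z hz]
  -- the center is nontrivial
  have hZne : ∃ z₀ ∈ Z, z₀ ≠ 1 := by
    haveI : Nontrivial (Q : Subgroup K) :=
      (Subgroup.nontrivial_iff_ne_bot _).mpr (Q.ne_bot_of_dvd_card hqK)
    haveI : Nontrivial (Subgroup.center (Q : Subgroup K)) := Q.isPGroup'.center_nontrivial
    obtain ⟨z, hz⟩ := exists_ne (1 : Subgroup.center (Q : Subgroup K))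
    refine ⟨((z : (Q : Subgroup K)) : K), Subgroup.mem_inf.mpr ⟨(z : (Q : Subgroup K)).2, ?_⟩, ?_⟩
    · rw [Subgroup.mem_centralizer_iff]
      intro y hy
      have := (Subgroup.mem_center_iff.mp z.2) ⟨y, hy⟩
      exact congrArg Subtype.val this
    · intro h
      apply hz
      ext
      exact congrArg Subtype.val (Subtype.ext h : (z : (Q : Subgroup K)) = 1)
  obtain ⟨z₀, hz₀Z, hz₀1⟩ := hZne
  -- Step D : apply the heart lemma with `H := S'`, `K := Z`.
  have hZcomm' : ∀ x y : Z, x * y = y * x := fun x y =>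
    Subtype.ext (hZcomm x x.2 y y.2)
  letI : SMul S' Z := ⟨fun g x => ⟨(g : H) • (x : K), hZinv g g.2 x x.2⟩⟩
  letI : MulAction S' Z :=
    { one_smul := fun x => Subtype.ext (one_smul H (x : K))
      mul_smul := fun g h x => Subtype.ext (mul_smul (g : H) (h : H) (x : K)) }
  letI : MulDistribMulAction S' Z :=
    { smul_mul := fun g x y => Subtype.ext
        (show (g : H) • ((x : K) * (y : K)) = ((g : H) • (x : K)) * ((g : H) • (y : K)) from
          smul_mul' _ _ _)
      smul_one := fun g => Subtype.ext (show (g : H) • (1 : K) = 1 from smul_one _) }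
  have hfree' : ∀ h : S', h ≠ 1 → ∀ x : Z, h • x = x → x = 1 := by
    intro h h1 x hx
    have hh : (h : H) ≠ 1 := fun hc => h1 (Subtype.ext hc)
    have : (h : H) • (x : K) = (x : K) := congrArg Subtype.val hx
    exact Subtype.ext (hfree (h : H) hh (x : K) this)
  set u' : S' := ⟨u, huS⟩
  set v' : S' := ⟨v, hvS⟩
  have huv' : Commute u' v' := Subtype.ext huv.eq
  have hu' : u' ^ p = 1 := by ext; push_cast; exact hu
  have hv' : v' ^ p = 1 := by ext; push_cast; exact hv
  have hu1' : u' ≠ 1 := fun h => hu1 (congrArg Subtype.val h)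
  have hvz' : v' ∉ Subgroup.zpowers u' := by
    intro hmem
    obtain ⟨m, hm⟩ := Subgroup.mem_zpowers_iff.mp hmem
    apply hvz
    exact Subgroup.mem_zpowers_iff.mpr ⟨m, by
      have := congrArg Subtype.val hm
      push_cast at this
      exact this⟩
  have hx := heart hZcomm' hfree' hp huv' hu' hv' hu1' hvz' (⟨z₀, hz₀Z⟩ : Z)
  have hz₀p : z₀ ^ p = 1 := by
    have := congrArg Subtype.val hx
    push_cast at this
    exact this
  have : orderOf z₀ = p := orderOf_eq_prime hz₀p hz₀1
  exact hpK (this ▸ orderOf_dvd_natCard z₀)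

private lemma count_le {G : Type*} [Group G] [Fintype G] [DecidableEq G]
    (hcomm : ∀ a b : G, a * b = b * a)
    (hkey : ∀ r : ℕ, r.Prime → ∀ u v : G, u ^ r = 1 → v ^ r = 1 → u ≠ 1 →
      v ∈ Subgroup.zpowers u) :
    ∀ n : ℕ, 0 < n → #{a : G | a ^ n = 1} ≤ n := by
  have hprime_count : ∀ r : ℕ, r.Prime → #{a : G | a ^ r = 1} ≤ r := by
    intro r hr
    by_cases hex : ∃ u : G, u ^ r = 1 ∧ u ≠ 1
    · obtain ⟨u, hur, hu1⟩ := hex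
      haveI : Fact r.Prime := ⟨hr⟩
      haveI : Fintype ((Subgroup.zpowers u : Subgroup G) : Set G) := Fintype.ofFinite _
      have hsub : ({a : G | a ^ r = 1} : Finset G) ⊆ (Subgroup.zpowers u : Set G).toFinset := by
        intro v hv
        rw [Set.mem_toFinset]
        have hv' : v ^ r = 1 := by simpa using hv
        exact hkey r hr u v hur hv' hu1
      calc #{a : G | a ^ r = 1} ≤ ((Subgroup.zpowers u : Set G).toFinset).card :=
            Finset.card_le_card hsub
        _ = Fintype.card ((Subgroup.zpowers u : Subgroup G) : Set G) := Set.toFinset_card _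
        _ = Nat.card (Subgroup.zpowers u) := by rw [← Nat.card_eq_fintype_card]; exact Nat.card_congr (Equiv.setCongr rfl)
        _ = r := by rw [Nat.card_zpowers, orderOf_eq_prime hur hu1]
    · push_neg at hex
      have hsub : ({a : G | a ^ r = 1} : Finset G) ⊆ {1} := by
        intro v hv
        have hv' : v ^ r = 1 := by simpa using hv
        simp [hex v hv']
      exact le_trans (Finset.card_le_card hsub) (by simpa using hr.one_lt.le)
  intro n
  induction n using Nat.strong_induction_on with
  | _ n ih =>
    intro hn
    by_cases h1 : n = 1
    · subst h1
      have hsub : ({a : G | a ^ (1 : ℕ) = 1} : Finset G) ⊆ {1} := by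
        intro v hv
        have hv' : v ^ (1 : ℕ) = 1 := by simpa using hv
        simpa using hv'
      simpa using Finset.card_le_card hsub
    · set r := n.minFac with hrdef
      have hr : r.Prime := Nat.minFac_prime h1
      have hrd : r ∣ n := n.minFac_dvd
      set m := n / r with hmdef
      have hm : 0 < m := Nat.div_pos (Nat.minFac_le hn) hr.pos
      have hmn : m < n := Nat.div_lt_self hn hr.one_lt
      have hrm : r * m = n := Nat.mul_div_cancel' hrd
      set s : Finset G := {a : G | a ^ n = 1} with hsdef
      set f : G → G := fun a => a ^ r with hfdef
      have himg : s.image f ⊆ ({a : G | a ^ m = 1} : Finset G) := by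
        intro b hb
        obtain ⟨a, ha, rfl⟩ := Finset.mem_image.mp hb
        have han : a ^ n = 1 := by
          have := Finset.mem_filter.mp ha
          simpa using this.2
        have : (a ^ r) ^ m = 1 := by rw [← pow_mul, hrm, han]
        simpa using this
      have hfib : ∀ b ∈ s.image f, #(s.filter fun x => f x = b) ≤ #{a : G | a ^ r = 1} := by
        intro b hb
        obtain ⟨a₀, ha₀, hfa₀⟩ := Finset.mem_image.mp hb
        have hfa₀' : a₀ ^ r = b := hfa₀
        apply Finset.card_le_card_of_injOn (fun x => a₀⁻¹ * x)
        · intro x hx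
          have hx2 : x ^ r = b := (Finset.mem_filter.mp hx).2
          have hpow : (a₀⁻¹ * x) ^ r = 1 := by
            have hcom : Commute a₀⁻¹ x := hcomm _ _
            rw [hcom.mul_pow, inv_pow, hx2, ← hfa₀']
            exact inv_mul_cancel _
          simpa using hpow
        · intro x _ y _ hxy
          exact mul_left_cancel hxy
      calc #s ≤ #{a : G | a ^ r = 1} * #(s.image f) :=
            Finset.card_le_mul_card_image s _ hfib
        _ ≤ r * m := Nat.mul_le_mul (hprime_count r hr)
            (le_trans (Finset.card_le_card himg) (ih m hmn hm))
        _ = n := hrm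

/-- Every abelian subgroup of a Frobenius complement is cyclic.
Here a Frobenius complement is a finite group `H` acting (by automorphisms) on a
non-trivial finite group `K` such that every non-identity element of `H` acts
without non-trivial fixed points. -/
theorem abelian_subgroup_of_frobenius_complement_isCyclic
    (H K : Type*) [Group H] [Group K] [Finite H] [Finite K] [Nontrivial K]
    [MulDistribMulAction H K]
    (hfree : ∀ h : H, h ≠ 1 → ∀ x : K, h • x = x → x = 1)
    (A : Subgroup H) (hA : ∀ x ∈ A, ∀ y ∈ A, x * y = y * x) :
    IsCyclic A := by
  classical
  letI : Fintype A := Fintype.ofFinite A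
  apply isCyclic_of_card_pow_eq_one_le
  apply count_le (fun a b => Subtype.ext (hA a a.2 b b.2))
  intro r hr u v hur hvr hu1
  have h1 : (u : H) ^ r = 1 := by
    have := congrArg Subtype.val hur
    push_cast at this
    exact this
  have h2 : (v : H) ^ r = 1 := by
    have := congrArg Subtype.val hvr
    push_cast at this
    exact this
  have huv : Commute (u : H) (v : H) := hA _ u.2 _ v.2
  have hz := key (K := K) hfree hr huv h1 h2 (fun hc => hu1 (Subtype.ext hc))
  obtain ⟨k, hk⟩ := Subgroup.mem_zpowers_iff.mp hz
  exact Subgroup.mem_zpowers_iff.mpr ⟨k, Subtype.ext (by push_cast; exact hk)⟩
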